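/- arXiv:2402.15455 — 15 statements merged into one kernel-verified Lean document; each statement's English description precedes it below -/
import Mathlib

section
/- If S is a good subring of a UQ ring R, then S is also a UQ ring. -/
/-- An element `a` of a ring is quasinilpotent if `1 - a*x` is a unit
for every `x` commuting with `a`. -/
def IsQuasinilpotent {R : Type*} [Ring R] (a : R) : Prop :=
  ∀ x : R, x * a = a * x → IsUnit (1 - a * x)

/-- A ring `R` is a UQ ring if `U(R) = 1 + QN(R)`. -/
def IsUQRing (R : Type*) [Ring R] : Prop :=
  ∀ u : R, IsUnit u ↔ ∃ q : R, IsQuasinilpotent q ∧ u = 1 + q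

theorem good_subring_uq {R : Type*} [Ring R] (S : Subring R)
    (hgood : ∀ s : S, IsUnit (s : R) ↔ IsUnit s)
    (hR : IsUQRing R) : IsUQRing S := by
  intro u
  constructor
  · intro hu
    have huR : IsUnit (u : R) := (hgood u).mpr hu
    obtain ⟨q', hq', hq'eq⟩ := (hR (u : R)).mp huR
    refine ⟨u - 1, ?_, by noncomm_ring⟩
    intro x hx
    rw [← hgood]
    have hcoe : ((u - 1 : S) : R) = q' := by
      push_cast [hq'eq]; noncomm_ring
    have : ((1 - (u - 1) * x : S) : R) = 1 - q' * (x : R) := by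
      push_cast [hcoe]; noncomm_ring
    rw [this]
    apply hq'
    have := congrArg (Subring.subtype S) hx
    simpa [hcoe] using this
  · rintro ⟨q, hq, rfl⟩
    have := hq (-1) (by noncomm_ring)
    simpa using this
end

section
/- A direct product ∏_{i∈I} R_i of rings is a UQ ring if and only if each R_i is a UQ ring. -/
lemma isUnit_pi_iff {I : Type*} {R : I → Type*} [∀ i, Ring (R i)] (u : ∀ i, R i) :
    IsUnit u ↔ ∀ i, IsUnit (u i) := by
  constructor
  · intro hu i
    exact hu.map (Pi.evalRingHom R i)
  · intro h
    choose v hv hv' using fun i => isUnit_iff_exists.mp (h i)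
    exact isUnit_iff_exists.mpr ⟨v, funext hv, funext hv'⟩

lemma qn_pi {I : Type*} {R : I → Type*} [∀ i, Ring (R i)] (a : ∀ i, R i) :
    IsQuasinilpotent a ↔ ∀ i, IsQuasinilpotent (a i) := by
  classical
  constructor
  · intro h i x hx
    have hX : Function.update (0 : (j : I) → R j) i x * a = a * Function.update (0 : (j : I) → R j) i x := by
      funext j
      by_cases hj : j = i
      · subst hj; simp [hx]
      · simp [Function.update_of_ne hj]
    have := (h (Function.update (0 : (j : I) → R j) i x) hX).map (Pi.evalRingHom R i)
    simpa using this
  · intro h x hx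
    rw [isUnit_pi_iff]
    intro i
    have := h i (x i) (congrFun hx i)
    simpa using this

theorem uq_pi {I : Type*} (R : I → Type*) [∀ i, Ring (R i)] :
    IsUQRing (∀ i, R i) ↔ ∀ i, IsUQRing (R i) := by
  classical
  constructor
  · intro h i u
    constructor
    · intro hu
      obtain ⟨q, hq, heq⟩ := (h (Function.update (1 : (j : I) → R j) i u)).mp (by
        rw [isUnit_pi_iff]
        intro j
        by_cases hj : j = i
        · subst hj; simpa using hu
        · simp [Function.update_of_ne hj])
      refine ⟨q i, (qn_pi q).mp hq i, ?_⟩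
      have := congrFun heq i
      simpa using this
    · rintro ⟨q, hq, rfl⟩
      have : IsUnit (1 + Function.update (0 : (j : I) → R j) i q) := by
        refine (h _).mpr ⟨_, ?_, rfl⟩
        rw [qn_pi]
        intro j
        by_cases hj : j = i
        · subst hj; simpa using hq
        · simp only [Function.update_of_ne hj]
          intro x _; simp
      have := this.map (Pi.evalRingHom R i)
      simpa using this
  · intro h u
    constructor
    · intro hu
      rw [isUnit_pi_iff] at hu
      choose q hq heq using fun i => (h i (u i)).mp (hu i)
      exact ⟨q, (qn_pi q).mpr hq, funext fun i => by simpa using heq i⟩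
    · rintro ⟨q, hq, rfl⟩
      rw [isUnit_pi_iff]
      intro i
      exact (h i _).mpr ⟨q i, (qn_pi q).mp hq i, by simp⟩
end

section
/- If R is a UQ ring and e is an idempotent of R, then the corner ring eRe (with identity e) is a UQ ring. -/
private lemma absorb_left {R : Type*} [Ring R] {e a : R} (he : e * e = e)
    (ha : a = e * a * e) : e * a = a := by
  conv_lhs => rw [ha]
  rw [← mul_assoc, ← mul_assoc, he, ← ha]

private lemma absorb_right {R : Type*} [Ring R] {e a : R} (he : e * e = e)
    (ha : a = e * a * e) : a * e = a := by
  conv_lhs => rw [ha]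
  rw [mul_assoc, he, ← ha]

private lemma unit_lift {R : Type*} [Ring R] {e a b : R} (he : e * e = e)
    (hab : a * b = e) (hae : a * e = a) (heb : e * b = b) :
    (a + (1 - e)) * (b + (1 - e)) = 1 := by
  have h1 : a * (1 - e) = 0 := by rw [mul_sub, mul_one, hae, sub_self]
  have h2 : (1 - e) * b = 0 := by rw [sub_mul, one_mul, heb, sub_self]
  have h3 : (1 - e) * (1 - e) = 1 - e := by
    calc (1 - e) * (1 - e) = 1 - e - e + e * e := by noncomm_ring
    _ = 1 - e := by rw [he]; abel
  calc (a + (1 - e)) * (b + (1 - e))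
      = a * b + a * (1 - e) + ((1 - e) * b + (1 - e) * (1 - e)) := by noncomm_ring
  _ = 1 := by rw [hab, h1, h2, h3]; abel

private lemma corner_inv {R : Type*} [Ring R] {e a : R} (he : e * e = e)
    (ha : a = e * a * e) (h : IsUnit (a + (1 - e))) :
    ∃ w : R, w = e * w * e ∧ a * w = e ∧ w * a = e := by
  obtain ⟨W, hW⟩ := h
  set w' : R := ↑W⁻¹ with hw'
  have hmul : (a + (1 - e)) * w' = 1 := by rw [← hW]; exact W.mul_inv
  have hmul' : w' * (a + (1 - e)) = 1 := by rw [← hW]; exact W.inv_mul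
  have hea : e * a = a := absorb_left he ha
  have hae : a * e = a := absorb_right he ha
  have hfa : (1 - e) * (a + (1 - e)) = 1 - e := by
    have h3 : (1 - e) * (1 - e) = 1 - e := by
      calc (1 - e) * (1 - e) = 1 - e - e + e * e := by noncomm_ring
      _ = 1 - e := by rw [he]; abel
    rw [mul_add, sub_mul, one_mul, hea, sub_self, zero_add, h3]
  have haf : (a + (1 - e)) * (1 - e) = 1 - e := by
    have h3 : (1 - e) * (1 - e) = 1 - e := by
      calc (1 - e) * (1 - e) = 1 - e - e + e * e := by noncomm_ring
      _ = 1 - e := by rw [he]; abel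
    rw [add_mul, mul_sub, mul_one, hae, sub_self, zero_add, h3]
  have hfw : (1 - e) * w' = 1 - e := by
    calc (1 - e) * w' = ((1 - e) * (a + (1 - e))) * w' := by rw [hfa]
    _ = (1 - e) * ((a + (1 - e)) * w') := by rw [mul_assoc]
    _ = 1 - e := by rw [hmul, mul_one]
  have hwf : w' * (1 - e) = 1 - e := by
    calc w' * (1 - e) = w' * ((a + (1 - e)) * (1 - e)) := by rw [haf]
    _ = 1 - e := by rw [← mul_assoc, hmul', one_mul]
  have h1 : a * w' = e := by
    have hh : a * w' + (1 - e) * w' = 1 := by rw [← add_mul, hmul]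
    have := eq_sub_of_add_eq hh
    rw [hfw] at this
    rw [this]
    abel
  have h2 : w' * a = e := by
    have hh : w' * a + w' * (1 - e) = 1 := by rw [← mul_add, hmul']
    have := eq_sub_of_add_eq hh
    rw [hwf] at this
    rw [this]
    abel
  refine ⟨e * w' * e, ?_, ?_, ?_⟩
  · rw [← mul_assoc, ← mul_assoc, he, mul_assoc (e * w'), he]
  · rw [← mul_assoc, ← mul_assoc, hae, mul_assoc, ← mul_assoc, h1, he]
  · rw [mul_assoc, hea, mul_assoc, h2, he]

/-- If `R` is a UQ ring and `e` an idempotent, then the corner ring `eRe`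
(with identity `e`) is a UQ ring: an element `u ∈ eRe` is a unit of `eRe`
iff `u = e + q` for some quasinilpotent `q` of `eRe`. -/
theorem corner_uq {R : Type*} [Ring R] (hR : IsUQRing R)
    (e : R) (he : IsIdempotentElem e) :
    ∀ u : R, u = e * u * e →
      ((∃ v : R, v = e * v * e ∧ u * v = e ∧ v * u = e) ↔
        ∃ q : R, q = e * q * e ∧
          (∀ x : R, x = e * x * e → x * q = q * x →
            ∃ w : R, w = e * w * e ∧ (e - q * x) * w = e ∧ w * (e - q * x) = e) ∧
          u = e + q) := by
  have he' : e * e = e := he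
  intro u hu
  have heu : e * u = u := absorb_left he' hu
  have hue : u * e = u := absorb_right he' hu
  constructor
  · rintro ⟨v, hv, huv, hvu⟩
    have hev : e * v = v := absorb_left he' hv
    have hve : v * e = v := absorb_right he' hv
    have hunit : IsUnit (u + (1 - e)) :=
      isUnit_iff_exists.mpr ⟨v + (1 - e),
        unit_lift he' huv hue hev, unit_lift he' hvu hve heu⟩
    obtain ⟨q', hq'QN, hq'eq⟩ := (hR _).mp hunit
    have hq : q' = u - e := by
      have h2 : 1 + q' = 1 + (u - e) := by rw [← hq'eq]; abel
      exact add_left_cancel h2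
    refine ⟨u - e, ?_, ?_, by abel⟩
    · have h1 : e * (u - e) * e = e * u * e - e * e * e := by noncomm_ring
      rw [h1, he', he', ← hu]
    · intro x hx hxq
      have hxe : x * e = x := absorb_right he' hx
      have hQ : IsUnit (1 - q' * x) := hq'QN x (by rw [hq]; exact hxq)
      rw [hq] at hQ
      have ha : e - (u - e) * x = e * (e - (u - e) * x) * e := by
        have h1 : e * (e - (u - e) * x) * e = e * e * e - e * (u - e) * (x * e) := by
          noncomm_ring
        have h2 : e * (u - e) = u - e := by rw [mul_sub, heu, he']
        rw [h1, hxe, he', he', h2]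
      have haf : (e - (u - e) * x) + (1 - e) = 1 - (u - e) * x := by abel
      obtain ⟨w, hw, h1, h2⟩ := corner_inv he' ha (by rw [haf]; exact hQ)
      exact ⟨w, hw, h1, h2⟩
  · rintro ⟨q, hqm, hqQN, hueq⟩
    have heq : e * q = q := absorb_left he' hqm
    have hqe : q * e = q := absorb_right he' hqm
    obtain ⟨w, hw, h1, h2⟩ := hqQN (-e)
      (by rw [mul_neg, neg_mul, he', he'])
      (by rw [neg_mul, mul_neg, heq, hqe])
    have key : e - q * (-e) = u := by rw [mul_neg, hqe, sub_neg_eq_add, ← hueq]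
    rw [key] at h1 h2
    exact ⟨w, hw, h1, h2⟩
end

section
/- The trivial extension T(R, M) of a ring R by an R-bimodule M is a UQ ring if and only if R is a UQ ring. -/
/-- In any ring, `1 + q` is a unit when `q` is quasinilpotent. -/
lemma isUnit_one_add_of_qn {R : Type*} [Ring R] {q : R} (hq : IsQuasinilpotent q) :
    IsUnit (1 + q) := by
  have := hq (-1) (by simp)
  simpa [sub_neg_eq_add, mul_neg] using this

theorem trivial_extension_uq (R : Type*) (M : Type*) [Ring R]
    [AddCommGroup M] [Module R M] [Module Rᵐᵒᵖ M] [SMulCommClass R Rᵐᵒᵖ M] :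
    IsUQRing (TrivSqZeroExt R M) ↔ IsUQRing R := by
  constructor
  · intro hT u
    constructor
    · intro hu
      have : IsUnit (TrivSqZeroExt.inl u : TrivSqZeroExt R M) :=
        TrivSqZeroExt.isUnit_inl_iff.mpr hu
      obtain ⟨Q, hQ, hEq⟩ := (hT _).mp this
      refine ⟨u - 1, ?_, by abel⟩
      intro x hx
      have hQval : Q = TrivSqZeroExt.inl (u - 1) := by
        rw [TrivSqZeroExt.inl_sub, TrivSqZeroExt.inl_one, hEq]; abel
      have := hQ (TrivSqZeroExt.inl x) (by
        rw [hQval, TrivSqZeroExt.inl_mul_inl, TrivSqZeroExt.inl_mul_inl, hx])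
      rw [hQval, TrivSqZeroExt.inl_mul_inl] at this
      have h2 : IsUnit ((1 - TrivSqZeroExt.inl ((u - 1) * x) :
          TrivSqZeroExt R M).fst) := TrivSqZeroExt.isUnit_iff_isUnit_fst.mp this
      simpa using h2
    · rintro ⟨q, hq, rfl⟩
      exact isUnit_one_add_of_qn hq
  · intro hR u
    constructor
    · intro hu
      have hf : IsUnit u.fst := TrivSqZeroExt.isUnit_iff_isUnit_fst.mp hu
      obtain ⟨q, hq, hEq⟩ := (hR _).mp hf
      refine ⟨u - 1, ?_, by abel⟩
      intro x hx
      rw [TrivSqZeroExt.isUnit_iff_isUnit_fst]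
      have hfst : (u - 1 : TrivSqZeroExt R M).fst = q := by
        simp [TrivSqZeroExt.fst_sub, hEq]
      have hcomm : x.fst * q = q * x.fst := by
        have := congrArg TrivSqZeroExt.fst hx
        simpa [TrivSqZeroExt.fst_mul, hfst] using this
      have := hq x.fst hcomm
      simpa [TrivSqZeroExt.fst_mul, hfst] using this
    · rintro ⟨q, hq, rfl⟩
      exact isUnit_one_add_of_qn hq
end

section
/- For n ≥ 1, the upper triangular matrix ring T_n(R) is a UQ ring if and only if R is a UQ ring. -/
/-- The subring of upper triangular `n × n` matrices over `R`. -/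
def upperTriangularSubring (n : ℕ) (R : Type*) [Ring R] :
    Subring (Matrix (Fin n) (Fin n) R) where
  carrier := {M | ∀ i j : Fin n, j < i → M i j = 0}
  mul_mem' {A B} ha hb := by
    intro i j hij
    rw [Matrix.mul_apply]
    apply Finset.sum_eq_zero
    intro k _
    rcases lt_or_ge k i with h | h
    · rw [ha i k h, zero_mul]
    · rw [hb k j (lt_of_lt_of_le hij h), mul_zero]
  one_mem' i j hij := Matrix.one_apply_ne (ne_of_gt hij)
  add_mem' {A B} ha hb i j hij := by
    simp [Matrix.add_apply, ha i j hij, hb i j hij]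
  zero_mem' i j hij := rfl
  neg_mem' {A} ha i j hij := by simp [Matrix.neg_apply, ha i j hij]

namespace UQAux

variable {n : ℕ} {R : Type*} [Ring R]

lemma isUnit_one_add_of_qn {q : R} (hq : IsQuasinilpotent q) : IsUnit (1 + q) := by
  have := hq (-1) (by simp)
  simpa using this

lemma diag_mul {A B : Matrix (Fin n) (Fin n) R}
    (hA : A ∈ upperTriangularSubring n R) (hB : B ∈ upperTriangularSubring n R)
    (i : Fin n) : (A * B) i i = A i i * B i i := by
  rw [Matrix.mul_apply]
  apply Finset.sum_eq_single i
  · intro k _ hk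
    rcases lt_or_gt_of_ne hk with h | h
    · rw [hA i k h, zero_mul]
    · rw [hB k i h, mul_zero]
  · intro h; exact absurd (Finset.mem_univ i) h

lemma diagonal_mem (d : Fin n → R) :
    Matrix.diagonal d ∈ upperTriangularSubring n R := by
  intro i j hij
  exact Matrix.diagonal_apply_ne d (ne_of_gt hij)

lemma isUnit_diag {M : upperTriangularSubring n R} (h : IsUnit M) (i : Fin n) :
    IsUnit ((M : Matrix (Fin n) (Fin n) R) i i) := by
  obtain ⟨v, rfl⟩ := h
  set N : upperTriangularSubring n R := ↑v⁻¹ with hN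
  have h1 : ((v : upperTriangularSubring n R) : Matrix (Fin n) (Fin n) R) * N = 1 := by
    exact_mod_cast congrArg Subtype.val v.mul_inv
  have h2 : (N : Matrix (Fin n) (Fin n) R) * (v : upperTriangularSubring n R) = 1 := by
    exact_mod_cast congrArg Subtype.val v.inv_mul
  have hab : ((v : upperTriangularSubring n R) : Matrix (Fin n) (Fin n) R) i i * (N : Matrix (Fin n) (Fin n) R) i i = 1 := by
    rw [← diag_mul (v : upperTriangularSubring n R).2 N.2 i, h1, Matrix.one_apply_eq]
  have hba : (N : Matrix (Fin n) (Fin n) R) i i * ((v : upperTriangularSubring n R) : Matrix (Fin n) (Fin n) R) i i = 1 := by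
    rw [← diag_mul N.2 (v : upperTriangularSubring n R).2 i, h2, Matrix.one_apply_eq]
  exact ⟨⟨_, _, hab, hba⟩, rfl⟩

lemma strict_pow {N : Matrix (Fin n) (Fin n) R}
    (h : ∀ i j : Fin n, j ≤ i → N i j = 0) : N ^ n = 0 := by
  have key : ∀ k : ℕ, ∀ i j : Fin n, (j : ℕ) < (i : ℕ) + k → (N ^ k) i j = 0 := by
    intro k
    induction k with
    | zero =>
      intro i j hij
      simp only [pow_zero]
      exact Matrix.one_apply_ne (by simp only [ne_eq, Fin.ext_iff]; omega)
    | succ k ih =>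
      intro i j hij
      rw [pow_succ, Matrix.mul_apply]
      apply Finset.sum_eq_zero
      intro l _
      rcases lt_or_ge (l : ℕ) ((i : ℕ) + k) with hl | hl
      · rw [ih i l hl, zero_mul]
      · have hjl : j ≤ l := by
          rw [Fin.le_def]; omega
        rw [h l j hjl, mul_zero]
  ext i j
  have hj := j.isLt
  rw [key n i j (by omega), Matrix.zero_apply]

/-- a triangular matrix whose diagonal entries are all units is a unit of the subring -/
lemma isUnit_of_diag (M : upperTriangularSubring n R)
    (hu : ∀ i : Fin n, IsUnit ((M : Matrix (Fin n) (Fin n) R) i i)) : IsUnit M := by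
  let u : Fin n → Rˣ := fun i => (hu i).unit
  have hu' : ∀ i, (u i : R) = (M : Matrix (Fin n) (Fin n) R) i i := fun i => (hu i).unit_spec
  let D : upperTriangularSubring n R :=
    ⟨Matrix.diagonal fun i => (u i : R), diagonal_mem _⟩
  let Dinv : upperTriangularSubring n R :=
    ⟨Matrix.diagonal fun i => ((u i)⁻¹ : Rˣ), diagonal_mem _⟩
  have hDD : D * Dinv = 1 := by
    apply Subtype.ext
    show Matrix.diagonal _ * Matrix.diagonal _ = (1 : Matrix (Fin n) (Fin n) R)
    rw [Matrix.diagonal_mul_diagonal]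
    simp
  have hDD' : Dinv * D = 1 := by
    apply Subtype.ext
    show Matrix.diagonal _ * Matrix.diagonal _ = (1 : Matrix (Fin n) (Fin n) R)
    rw [Matrix.diagonal_mul_diagonal]
    simp
  set k : upperTriangularSubring n R := Dinv * (M - D) with hkdef
  have hkco : (k : Matrix (Fin n) (Fin n) R) =
      Matrix.diagonal (fun i => ((u i)⁻¹ : Rˣ) : Fin n → R) *
        ((M : Matrix (Fin n) (Fin n) R) - Matrix.diagonal fun i => (u i : R)) := rfl
  have hk : ∀ i j : Fin n, j ≤ i → (k : Matrix (Fin n) (Fin n) R) i j = 0 := by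
    intro i j hij
    rw [hkco, Matrix.diagonal_mul]
    rcases eq_or_lt_of_le hij with he | hl
    · subst he
      simp [hu' j]
    · rw [Matrix.sub_apply, M.2 i j hl, Matrix.diagonal_apply_ne _ (ne_of_gt hl)]
      simp
  have hknil : k ^ n = 0 := by
    apply Subtype.ext
    show ((k ^ n : upperTriangularSubring n R) : Matrix (Fin n) (Fin n) R) = 0
    rw [SubmonoidClass.coe_pow]
    exact strict_pow hk
  -- inverse of 1 + k via geometric series
  set s : upperTriangularSubring n R := ∑ i ∈ Finset.range n, (-k) ^ i with hsdef
  have hnegkn : (-k) ^ n = 0 := by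
    rw [neg_pow, hknil, mul_zero]
  have hneg : (-k - 1 : upperTriangularSubring n R) = -(1 + k) := by abel
  have h1 : s * (1 + k) = 1 := by
    have hg := geom_sum_mul (-k) n
    rw [hnegkn, hneg, mul_neg, zero_sub] at hg
    have := neg_injective hg
    simpa [hsdef] using this
  have h2 : (1 + k) * s = 1 := by
    have hg := mul_geom_sum (-k) n
    rw [hnegkn, hneg, neg_mul, zero_sub] at hg
    have := neg_injective hg
    simpa [hsdef] using this
  have hunit1k : IsUnit (1 + k) := ⟨⟨1 + k, s, h2, h1⟩, rfl⟩
  have hD : IsUnit D := ⟨⟨D, Dinv, hDD, hDD'⟩, rfl⟩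
  have hM : M = D * (1 + k) := by
    rw [mul_add, mul_one, hkdef, ← mul_assoc, hDD, one_mul]
    abel
  rw [hM]
  exact hD.mul hunit1k

end UQAux

theorem upper_triangular_uq (n : ℕ) (hn : 1 ≤ n) (R : Type*) [Ring R] :
    IsUQRing (upperTriangularSubring n R) ↔ IsUQRing R := by
  constructor
  · -- T UQ → R UQ
    intro hT u
    constructor
    · intro hu
      obtain ⟨v, hv⟩ := hu
      refine ⟨u - 1, ?_, by abel⟩
      intro x hx
      -- scalar matrices
      let U : upperTriangularSubring n R :=
        ⟨Matrix.diagonal fun _ => u, UQAux.diagonal_mem _⟩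
      let Uinv : upperTriangularSubring n R :=
        ⟨Matrix.diagonal fun _ => ((v⁻¹ : Rˣ) : R), UQAux.diagonal_mem _⟩
      have hUu : IsUnit U := by
        refine ⟨⟨U, Uinv, ?_, ?_⟩, rfl⟩ <;>
        · apply Subtype.ext
          show Matrix.diagonal _ * Matrix.diagonal _ = (1 : Matrix (Fin n) (Fin n) R)
          rw [Matrix.diagonal_mul_diagonal]
          simp [← hv]
      obtain ⟨q, hq, hUq⟩ := (hT U).mp hUu
      let X : upperTriangularSubring n R :=
        ⟨Matrix.diagonal fun _ => x, UQAux.diagonal_mem _⟩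
      have hqval : (q : Matrix (Fin n) (Fin n) R) = Matrix.diagonal fun _ => u - 1 := by
        have : q = U - 1 := by rw [hUq]; abel
        rw [this]
        show (U : Matrix (Fin n) (Fin n) R) - 1 = _
        show Matrix.diagonal (fun _ => u) - 1 = _
        rw [← Matrix.diagonal_one, Matrix.diagonal_sub]
      have hcomm : X * q = q * X := by
        apply Subtype.ext
        show (X : Matrix (Fin n) (Fin n) R) * q = (q : Matrix (Fin n) (Fin n) R) * X
        rw [hqval]
        show Matrix.diagonal _ * Matrix.diagonal _ = Matrix.diagonal _ * Matrix.diagonal _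
        rw [Matrix.diagonal_mul_diagonal, Matrix.diagonal_mul_diagonal]
        simp only [hx]
      have hqX := hq X hcomm
      have hval : ((1 - q * X : upperTriangularSubring n R) : Matrix (Fin n) (Fin n) R) =
          Matrix.diagonal fun _ => 1 - (u - 1) * x := by
        show (1 : Matrix (Fin n) (Fin n) R) - (q : Matrix (Fin n) (Fin n) R) * X = _
        rw [hqval]
        show (1 : Matrix (Fin n) (Fin n) R) - Matrix.diagonal _ * Matrix.diagonal _ = _
        rw [Matrix.diagonal_mul_diagonal, ← Matrix.diagonal_one, Matrix.diagonal_sub]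
      have := UQAux.isUnit_diag hqX ⟨0, hn⟩
      rw [hval, Matrix.diagonal_apply_eq] at this
      exact this
    · rintro ⟨q, hq, rfl⟩
      exact UQAux.isUnit_one_add_of_qn hq
  · -- R UQ → T UQ
    intro hR M
    constructor
    · intro hM
      refine ⟨M - 1, ?_, by abel⟩
      intro X hX
      -- diagonal entries of M are units, M i i - 1 quasinilpotent in R
      have hdiag : ∀ i : Fin n, IsUnit ((M : Matrix (Fin n) (Fin n) R) i i) :=
        fun i => UQAux.isUnit_diag hM i
      have hqn : ∀ i : Fin n,
          IsQuasinilpotent ((M : Matrix (Fin n) (Fin n) R) i i - 1) := by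
        intro i
        obtain ⟨q, hq, hq'⟩ := (hR _).mp (hdiag i)
        have : (M : Matrix (Fin n) (Fin n) R) i i - 1 = q := by rw [hq']; abel
        rw [this]; exact hq
      apply UQAux.isUnit_of_diag
      intro i
      have hco : ((1 - (M - 1) * X : upperTriangularSubring n R) : Matrix (Fin n) (Fin n) R) i i =
          1 - ((M : Matrix (Fin n) (Fin n) R) i i - 1) * (X : Matrix (Fin n) (Fin n) R) i i := by
        show ((1 : Matrix (Fin n) (Fin n) R) -
          ((M - 1 : upperTriangularSubring n R) : Matrix (Fin n) (Fin n) R) * X) i i = _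
        rw [Matrix.sub_apply, Matrix.one_apply_eq,
          UQAux.diag_mul (M - 1 : upperTriangularSubring n R).2 X.2 i]
        congr 2
        show ((M : Matrix (Fin n) (Fin n) R) - 1) i i = _
        rw [Matrix.sub_apply, Matrix.one_apply_eq]
      have hcommi : (X : Matrix (Fin n) (Fin n) R) i i *
          ((M : Matrix (Fin n) (Fin n) R) i i - 1) =
          ((M : Matrix (Fin n) (Fin n) R) i i - 1) * (X : Matrix (Fin n) (Fin n) R) i i := by
        have h1 : ((X * (M - 1) : upperTriangularSubring n R) : Matrix (Fin n) (Fin n) R) i i =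
            ((((M - 1) * X : upperTriangularSubring n R)) : Matrix (Fin n) (Fin n) R) i i := by
          rw [hX]
        simp only [Subring.coe_mul] at h1
        rw [UQAux.diag_mul X.2 (M - 1 : upperTriangularSubring n R).2 i,
          UQAux.diag_mul (M - 1 : upperTriangularSubring n R).2 X.2 i] at h1
        have hm1 : ((M - 1 : upperTriangularSubring n R) : Matrix (Fin n) (Fin n) R) i i =
            (M : Matrix (Fin n) (Fin n) R) i i - 1 := by
          show ((M : Matrix (Fin n) (Fin n) R) - 1) i i = _
          rw [Matrix.sub_apply, Matrix.one_apply_eq]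
        rw [hm1] at h1
        exact h1
      rw [hco]
      exact hqn i _ hcommi
    · rintro ⟨q, hq, rfl⟩
      exact UQAux.isUnit_one_add_of_qn hq
end

section
/- The formal power series ring R[[x]] is a UQ ring if and only if R is a UQ ring. -/
theorem powerSeries_uq (R : Type*) [Ring R] :
    IsUQRing (PowerSeries R) ↔ IsUQRing R := by
  constructor
  · intro H u
    constructor
    · intro hu
      have hCu : IsUnit (PowerSeries.C (R := R) u) := by
        rw [PowerSeries.isUnit_iff_constantCoeff]; simpa using hu
      obtain ⟨f, hf, hfe⟩ := (H (PowerSeries.C (R := R) u)).mp hCu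
      have hfC : f = PowerSeries.C (R := R) (u - 1) := by
        rw [map_sub, map_one]
        exact eq_sub_of_add_eq' hfe.symm
      refine ⟨u - 1, ?_, by abel⟩
      intro x hx
      have := hf (PowerSeries.C (R := R) x) (by rw [hfC, ← map_mul, ← map_mul, hx])
      rw [hfC, ← map_mul, ← map_one (PowerSeries.C (R := R)), ← map_sub,
        PowerSeries.isUnit_iff_constantCoeff] at this
      simpa using this
    · rintro ⟨q, hq, rfl⟩
      exact isUnit_one_add_of_qn hq
  · intro H f
    constructor
    · intro hf
      have hc : IsUnit (PowerSeries.constantCoeff (R := R) f) :=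
        PowerSeries.isUnit_iff_constantCoeff.mp hf
      obtain ⟨q₀, hq₀, hce⟩ := (H _).mp hc
      refine ⟨f - 1, ?_, by abel⟩
      intro g hg
      have hgf : g * f = f * g := by
        rw [mul_sub, sub_mul, mul_one, one_mul] at hg
        exact sub_left_inj.mp hg
      rw [PowerSeries.isUnit_iff_constantCoeff]
      have hg₀ : (PowerSeries.constantCoeff (R := R) g) * q₀ = q₀ * (PowerSeries.constantCoeff (R := R) g) := by
        have h1 : (PowerSeries.constantCoeff (R := R) g) * (PowerSeries.constantCoeff (R := R) f)
            = (PowerSeries.constantCoeff (R := R) f) * (PowerSeries.constantCoeff (R := R) g) := by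
          rw [← map_mul, ← map_mul, hgf]
        rw [hce, mul_add, add_mul, mul_one, one_mul] at h1
        exact add_left_cancel h1
      have := hq₀ _ hg₀
      have hq0 : PowerSeries.constantCoeff (R := R) (f - 1) = q₀ := by
        rw [map_sub, map_one, hce, add_sub_cancel_left]
      simpa [map_sub, map_mul, hq0] using this
    · rintro ⟨q, hq, rfl⟩
      exact isUnit_one_add_of_qn hq
end

section
/- A ring R is reduced if and only if QN(R[x]) = {0}. -/
open Polynomial Finset

lemma red_mul {R : Type*} [Ring R] [IsReduced R] {a b : R} (h : a * b = 0) (r : R) :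
    a * r * b = 0 := by
  have hba : b * a = 0 := by
    apply IsReduced.eq_zero (b * a) ⟨2, ?_⟩
    have : (b * a) ^ 2 = b * (a * b) * a := by noncomm_ring
    rw [this, h, mul_zero, zero_mul]
  apply IsReduced.eq_zero _ ⟨2, ?_⟩
  have : (a * r * b) ^ 2 = a * r * (b * a) * r * b := by noncomm_ring
  rw [this, hba, mul_zero, zero_mul, zero_mul]

lemma key_step {R : Type*} [Ring R] [IsReduced R] {f g : Polynomial R}
    (hfg : f * g = 1) (hn : f.natDegree ≠ 0) (K : ℕ) (j : ℕ)
    (h : ∀ l, j < l → f.leadingCoeff ^ K * g.coeff l = 0) :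
    f.leadingCoeff ^ (K + 1) * g.coeff j = 0 := by
  set n := f.natDegree with hndef
  set a := f.leadingCoeff with hadef
  have hc : (f * g).coeff (n + j) = 0 := by
    rw [hfg, Polynomial.coeff_one]
    simp [Nat.add_eq_zero, hn]
  rw [Polynomial.coeff_mul] at hc
  have hsum : ∑ x ∈ Finset.HasAntidiagonal.antidiagonal (n + j), a ^ K * (f.coeff x.1 * g.coeff x.2)
      = a ^ K * (f.coeff n * g.coeff j) := by
    apply Finset.sum_eq_single_of_mem (n, j)
    · simp [Finset.HasAntidiagonal.mem_antidiagonal]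
    · rintro ⟨i, l⟩ hmem hne
      rw [Finset.HasAntidiagonal.mem_antidiagonal] at hmem
      rcases lt_trichotomy i n with hi | hi | hi
      · have hl : j < l := by omega
        have h0 : a ^ K * g.coeff l = 0 := h l hl
        rw [← mul_assoc]
        exact red_mul h0 (f.coeff i)
      · exfalso; apply hne; simp at hmem ⊢; omega
      · have : f.coeff i = 0 := Polynomial.coeff_eq_zero_of_natDegree_lt hi
        rw [this, zero_mul, mul_zero]
  have hfin : a ^ K * (f.coeff n * g.coeff j) = 0 := by
    rw [← hsum, ← Finset.mul_sum, hc, mul_zero]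
  have hcn : f.coeff n = a := rfl
  rw [hcn] at hfin
  rw [pow_succ, mul_assoc]
  exact hfin

lemma unit_natDegree_zero {R : Type*} [Ring R] [IsReduced R] {f g : Polynomial R}
    (hfg : f * g = 1) (hgf : g * f = 1) : f.natDegree = 0 := by
  by_contra hn
  set a := f.leadingCoeff with hadef
  set m := g.natDegree with hmdef
  -- claim: ∀ k j, m ≤ j + k → a^(k+1) * g.coeff j = 0
  have claim : ∀ k : ℕ, ∀ j : ℕ, m ≤ j + k → a ^ (k + 1) * g.coeff j = 0 := by
    intro k
    induction k with
    | zero =>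
      intro j hj
      rcases eq_or_lt_of_le hj with hj' | hj'
      · exact key_step hfg hn 0 j (fun l hl => by
          rw [pow_zero, one_mul,
            Polynomial.coeff_eq_zero_of_natDegree_lt (by omega)])
      · rw [Polynomial.coeff_eq_zero_of_natDegree_lt (by omega), mul_zero]
    | succ k ih =>
      intro j hj
      by_cases hj' : m ≤ j + k
      · rw [pow_succ', mul_assoc, ih j hj', mul_zero]
      · exact key_step hfg hn (k + 1) j (fun l hl => ih l (by omega))
  have h0 : a ^ (m + 1) * g.coeff 0 = 0 := claim m 0 (by omega)
  have hone : g.coeff 0 * f.coeff 0 = 1 := by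
    have := congrArg (fun p => Polynomial.coeff p 0) hgf
    simpa [Polynomial.mul_coeff_zero] using this
  have : a ^ (m + 1) = 0 := by
    calc a ^ (m + 1) = a ^ (m + 1) * (g.coeff 0 * f.coeff 0) := by rw [hone, mul_one]
    _ = a ^ (m + 1) * g.coeff 0 * f.coeff 0 := by rw [mul_assoc]
    _ = 0 := by rw [h0, zero_mul]
  have ha : a = 0 := IsReduced.eq_zero a ⟨m + 1, this⟩
  have hf0 : f ≠ 0 := fun h => hn (by simp [h])
  exact (Polynomial.leadingCoeff_ne_zero.mpr hf0) ha

lemma sq_zero_reduced {R : Type*} [Ring R] (hsq : ∀ a : R, a * a = 0 → a = 0) :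
    IsReduced R := by
  have key : ∀ n : ℕ, ∀ a : R, a ^ (n + 1) = 0 → a = 0 := by
    intro n
    induction n with
    | zero => intro a ha; simpa using ha
    | succ n ih =>
      intro a ha
      apply ih
      apply hsq
      have h2 : a ^ (n + 1) * a ^ (n + 1) = a ^ (n + 2) * a ^ n := by
        rw [← pow_add, ← pow_add]; congr 1; omega
      rw [h2, ha, zero_mul]
  refine ⟨fun a ha => ?_⟩
  obtain ⟨n, hn⟩ := ha
  cases n with
  | zero =>
    rw [pow_zero] at hn
    calc a = a * 1 := (mul_one a).symm
    _ = a * 0 := by rw [hn]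
    _ = 0 := mul_zero a
  | succ n => exact key n a hn

theorem reduced_iff_qn_polynomial_zero (R : Type*) [Ring R] :
    IsReduced R ↔ {p : Polynomial R | IsQuasinilpotent p} = {0} := by
  constructor
  · intro hred
    ext p
    simp only [Set.mem_setOf_eq, Set.mem_singleton_iff]
    constructor
    · intro hp
      rcases subsingleton_or_nontrivial R with hs | hnt
      · exact Subsingleton.elim p 0
      obtain ⟨u, hu⟩ := hp X (Polynomial.X_mul)
      by_contra hp0
      have hd0 : ((u : Polynomial R)).natDegree = 0 :=
        unit_natDegree_zero u.mul_inv u.inv_mul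
      rw [hu] at hd0
      have h3 : (p * X).natDegree = p.natDegree + 1 := Polynomial.natDegree_mul_X hp0
      have h4 : (1 - p * X).natDegree = (p * X).natDegree := by
        apply Polynomial.natDegree_sub_eq_right_of_natDegree_lt
        rw [h3, Polynomial.natDegree_one]
        omega
      rw [h4, h3] at hd0
      omega
    · rintro rfl
      intro x hx
      simp
  · intro h
    apply sq_zero_reduced
    intro a ha
    have hq : IsQuasinilpotent (C a : Polynomial R) := by
      intro x hx
      have hnil : IsNilpotent ((C a : Polynomial R) * x) := by
        refine ⟨2, ?_⟩
        have h2 : ((C a : Polynomial R) * x) ^ 2 = C a * (x * C a) * x := by noncomm_ring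
        rw [h2, hx, ← mul_assoc, ← Polynomial.C_mul, ha, Polynomial.C_0, zero_mul, zero_mul]
      exact hnil.isUnit_one_sub
    have hmem : (C a : Polynomial R) ∈ {p : Polynomial R | IsQuasinilpotent p} := hq
    rw [h] at hmem
    have : (C a : Polynomial R) = 0 := hmem
    exact Polynomial.C_eq_zero.mp this
end

section
/- Let R be a ring, a ∈ QN(R), and b ∈ Z(R) a central element. Then ab ∈ QN(R). -/
theorem qn_mul_central {R : Type*} [Ring R] (a b : R)
    (ha : IsQuasinilpotent a) (hb : b ∈ Set.center R) :
    IsQuasinilpotent (a * b) := by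
  intro x hx
  have hbx : ∀ g : R, b * g = g * b := fun g => (Set.mem_center_iff.mp hb).comm g
  have hc : (b * x) * a = a * (b * x) := by
    calc (b * x) * a = x * (b * a) := by rw [hbx x, mul_assoc]
    _ = x * (a * b) := by rw [hbx a]
    _ = (a * b) * x := hx
    _ = a * (b * x) := by rw [mul_assoc]
  have := ha (b * x) hc
  rwa [← mul_assoc] at this
end

section
/- Let R be a ring, a ∈ QN(R), and b ∈ QN(R) ∩ Z(R). Then a + b ∈ QN(R). -/
theorem qn_add_central_qn {R : Type*} [Ring R] (a b : R)
    (ha : IsQuasinilpotent a) (hb : IsQuasinilpotent b)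
    (hbz : b ∈ Set.center R) : IsQuasinilpotent (a + b) := by
  intro x hx
  have hbx : ∀ y : R, b * y = y * b := fun y => hbz.comm y
  have hxa : x * a = a * x := by
    have h1 : x * a + x * b = a * x + b * x := by
      rw [← mul_add, ← add_mul]; exact hx
    have h2 : x * b = b * x := (hbx x).symm
    have := h1
    rw [h2] at this
    exact add_right_cancel this
  have hu : IsUnit (1 - b * x) := hb x (hbx x).symm
  obtain ⟨v, hv⟩ := hu
  have hcomm : Commute a (v : R) := by
    rw [hv]
    simp only [Commute, SemiconjBy]
    rw [mul_sub, sub_mul, mul_one, one_mul, ← mul_assoc, ← hbx a, mul_assoc b x a, hxa]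
    noncomm_ring
  have hcinv : Commute a ((↑v⁻¹ : R)) := hcomm.units_inv_right
  set z : R := (↑v⁻¹ : R) * x with hz
  have hza : z * a = a * z := by
    calc (↑v⁻¹ : R) * x * a = (↑v⁻¹ : R) * (a * x) := by rw [mul_assoc, hxa]
    _ = a * ((↑v⁻¹ : R) * x) := by rw [← mul_assoc, ← hcinv.eq, mul_assoc]
  have hun : IsUnit (1 - a * z) := ha z hza
  have key : (1 - (a + b) * x) = (v : R) * (1 - a * z) := by
    have haz : a * z = (↑v⁻¹ : R) * (a * x) := by
      rw [hz, ← mul_assoc, hcinv.eq, mul_assoc]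
    rw [mul_sub, mul_one, haz, ← mul_assoc, Units.mul_inv, one_mul, hv]
    noncomm_ring
  rw [key]
  exact v.isUnit.mul hun
end

section
/- A ring R is a UQ ring if and only if U(R) + (U(R) ∩ Z(R)) ⊆ QN(R) (equivalently, U(R) + (U(R) ∩ Z(R)) = QN(R)). -/
theorem uq_iff_unit_add_central_unit_qn (R : Type*) [Ring R] :
    IsUQRing R ↔
      ∀ u v : R, IsUnit u → IsUnit v → v ∈ Set.center R →
        IsQuasinilpotent (u + v) := by
  constructor
  · intro hUQ u v hu hv hc x hx
    have hvc : ∀ y : R, y * v = v * y := fun y => ((Set.mem_center_iff.mp hc).comm y).symm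
    obtain ⟨w, rfl⟩ := hv
    set c : R := (↑w : R) with hcdef
    -- -(w⁻¹ * u) is a unit, hence equals 1 + q for some quasinilpotent q
    have h1 : IsUnit (-((↑w⁻¹ : R) * u)) := ((w⁻¹).isUnit.mul hu).neg
    obtain ⟨q, hq, hq'⟩ := (hUQ _).mp h1
    have hw1 : (↑w⁻¹ : R) * u = -(1 + q) := neg_eq_iff_eq_neg.mp hq'
    have key : u + c = -(c * q) := by
      have h2 : c * ((↑w⁻¹ : R) * u) = c * (-(1 + q)) := by rw [hw1]
      rw [← mul_assoc, hcdef, Units.mul_inv, one_mul] at h2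
      rw [h2]; noncomm_ring
    rw [key]
    -- x commutes with c*q, hence with q
    have hxq : x * q = q * x := by
      rw [key] at hx
      have h3 : c * (x * q) = c * (q * x) := by
        calc c * (x * q) = -(x * -(c * q)) := by
              rw [mul_neg, neg_neg, ← mul_assoc, ← hvc x, mul_assoc]
          _ = -(-(c * q) * x) := by rw [hx]
          _ = c * (q * x) := by rw [neg_mul, neg_neg, mul_assoc]
      exact w.mul_right_inj.mp h3
    have hstep : -(c * q) * x = q * -(c * x) := by
      rw [← hvc q, neg_mul, mul_assoc, ← mul_neg]
    have hcomm : (-(c * x)) * q = q * (-(c * x)) := by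
      calc (-(c * x)) * q = -(c * (x * q)) := by rw [neg_mul, mul_assoc]
        _ = -(c * (q * x)) := by rw [hxq]
        _ = -(c * q) * x := by rw [neg_mul, mul_assoc]
        _ = q * -(c * x) := hstep
    have := hq (-(c * x)) hcomm
    rwa [← hstep] at this
  · intro h u
    constructor
    · intro hu
      refine ⟨u - 1, ?_, by noncomm_ring⟩
      have := h u (-1) hu isUnit_one.neg (Set.neg_mem_center (Set.one_mem_center))
      have heq : u - 1 = u + (-1) := by noncomm_ring
      rwa [heq]
    · rintro ⟨q, hq, rfl⟩
      have := hq (-1) (by noncomm_ring)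
      simpa using this
end

section
/- For any nonzero ring S and any integer n ≥ 2, the full matrix ring M_n(S) is not a UQ ring. -/
open Matrix

theorem matrix_not_uq (S : Type*) [Ring S] [Nontrivial S]
    (n : ℕ) (hn : 2 ≤ n) :
    ¬ IsUQRing (Matrix (Fin n) (Fin n) S) := by
  intro h
  set i0 : Fin n := ⟨0, by omega⟩ with hi0
  set i1 : Fin n := ⟨1, by omega⟩ with hi1
  have h01 : i0 ≠ i1 := by simp [hi0, hi1, Fin.ext_iff]
  have h10 : i1 ≠ i0 := h01.symm
  set E : Fin n → Fin n → Matrix (Fin n) (Fin n) S :=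
    fun i j => single i j 1 with hE
  set q : Matrix (Fin n) (Fin n) S := E i0 i1 + E i1 i0 + E i1 i1 with hq
  set x : Matrix (Fin n) (Fin n) S := E i0 i1 + E i1 i0 - E i0 i0 with hx
  set v : Matrix (Fin n) (Fin n) S := 1 + E i0 i0 - E i0 i1 - E i1 i0 with hv
  have hqx : q * x = E i0 i0 + E i1 i1 := by
    simp only [hq, hx, hE, add_mul, mul_add, mul_sub, sub_mul,
      single_mul_single_same, single_mul_single_of_ne, ne_eq, h01, not_false_eq_true,
      h10, one_mul]
    abel
  have hxq : x * q = E i0 i0 + E i1 i1 := by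
    simp only [hq, hx, hE, add_mul, mul_add, mul_sub, sub_mul,
      single_mul_single_same, single_mul_single_of_ne, ne_eq, h01, not_false_eq_true,
      h10, one_mul]
    abel
  have huv : (1 + q) * v = 1 := by
    simp only [hq, hv, hE, add_mul, mul_add, mul_sub, sub_mul, mul_one, one_mul,
      single_mul_single_same, single_mul_single_of_ne, ne_eq, h01, not_false_eq_true,
      h10]
    abel
  have hvu : v * (1 + q) = 1 := by
    simp only [hq, hv, hE, add_mul, mul_add, mul_sub, sub_mul, mul_one, one_mul,
      single_mul_single_same, single_mul_single_of_ne, ne_eq, h01, not_false_eq_true,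
      h10]
    abel
  have hu : IsUnit (1 + q : Matrix (Fin n) (Fin n) S) := ⟨⟨1 + q, v, huv, hvu⟩, rfl⟩
  obtain ⟨q', hq', heq⟩ := (h _).mp hu
  have hqq : q' = q := by
    have := heq
    rw [add_right_inj] at this  -- 1 + q = 1 + q' → q = q'
    exact this.symm
  subst hqq
  have hbad : IsUnit (1 - q * x) := hq' x (hxq.trans hqx.symm)
  rw [hqx] at hbad
  obtain ⟨w, hw⟩ := hbad
  have h1 : (1 - (E i0 i0 + E i1 i1)) * (Units.val w⁻¹) = 1 := by
    rw [← hw]; exact w.mul_inv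
  have hzero : ∀ k : Fin n, ((1 - (E i0 i0 + E i1 i1)) : Matrix (Fin n) (Fin n) S) i0 k = 0 := by
    intro k
    by_cases hk : k = i0
    · subst hk
      simp [hE, Matrix.one_apply, Matrix.single, h10]
    · simp [hE, Matrix.one_apply, Ne.symm hk, Matrix.single, hk, h10]
  have h3 : (1 : Matrix (Fin n) (Fin n) S) i0 i0 = 0 := by
    rw [← h1, Matrix.mul_apply]
    apply Finset.sum_eq_zero
    intro k _
    rw [hzero k, zero_mul]
  rw [Matrix.one_apply_eq] at h3
  exact one_ne_zero h3
end

section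
/- Every UQ ring is Dedekind finite: if R is a UQ ring and a, b ∈ R satisfy ab = 1, then ba = 1. -/
theorem uq_dedekind_finite {R : Type*} [Ring R] (hR : IsUQRing R)
    (a b : R) (hab : a * b = 1) : b * a = 1 := by
  have hab' : ∀ x : R, a * (b * x) = x := fun x => by rw [← mul_assoc, hab, one_mul]
  -- e is the idempotent 1 - b*a
  set e : R := 1 - b * a with he
  -- q = e + e*a + b*e ; p = e + b*e*a
  set q : R := e + e * a + b * e with hq
  set p : R := e + b * e * a with hp
  -- 1 + e*a is a unit
  have h1 : IsUnit (1 + e * a) := by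
    refine ⟨⟨1 + e * a, 1 - e * a, ?_, ?_⟩, rfl⟩ <;>
    · simp only [he, mul_sub, sub_mul, mul_add, add_mul, mul_one, one_mul, mul_assoc, hab', hab]
      noncomm_ring
  -- 1 + b*e is a unit
  have h2 : IsUnit (1 + b * e) := by
    refine ⟨⟨1 + b * e, 1 - b * e, ?_, ?_⟩, rfl⟩ <;>
    · simp only [he, mul_sub, sub_mul, mul_add, add_mul, mul_one, one_mul, mul_assoc, hab', hab]
      noncomm_ring
  -- hence u = 1 + q is a unit
  have hu : IsUnit (1 + q) := by
    have hprod : (1 + e * a) * (1 + b * e) = 1 + q := by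
      simp only [hq, he, mul_sub, sub_mul, mul_add, add_mul, mul_one, one_mul, mul_assoc,
        hab', hab]
      noncomm_ring
    rw [← hprod]
    exact h1.mul h2
  -- by the UQ property, q is quasinilpotent
  obtain ⟨w, hw, hweq⟩ := (hR (1 + q)).mp hu
  have hwq : w = q := (add_right_inj (1:R)).mp hweq.symm
  rw [hwq] at hw
  -- apply quasinilpotence with x = q - 1, which commutes with q
  have hcomm : (q - 1) * q = q * (q - 1) := by noncomm_ring
  have hup : IsUnit (1 - q * (q - 1)) := hw (q - 1) hcomm
  -- q*(q-1) = p
  have hqqp : q * (q - 1) = p := by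
    simp only [hq, hp, he, mul_sub, sub_mul, mul_add, add_mul, mul_one, one_mul, mul_assoc,
      hab', hab]
    noncomm_ring
  rw [hqqp] at hup
  -- p is idempotent
  have hpp : p * p = p := by
    simp only [hp, he, mul_sub, sub_mul, mul_add, add_mul, mul_one, one_mul, mul_assoc,
      hab', hab]
    noncomm_ring
  -- an idempotent with 1 - p a unit must be 0
  obtain ⟨v, hv⟩ := hup.exists_right_inv
  have hp0 : p = 0 := by
    have h3 : p * ((1 - p) * v) = p := by rw [hv, mul_one]
    have h4 : p * ((1 - p) * v) = 0 := by
      rw [← mul_assoc, mul_sub, mul_one, hpp, sub_self, zero_mul]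
    rw [← h3, h4]
  -- e * p = e, hence e = 0
  have hep : e * p = e := by
    simp only [hp, he, mul_sub, sub_mul, mul_add, add_mul, mul_one, one_mul, mul_assoc,
      hab', hab]
    noncomm_ring
  have he0 : e = 0 := by rw [← hep, hp0, mul_zero]
  have h5 : (1 : R) - b * a = 0 := by rw [← he, he0]
  have h6 := sub_eq_zero.mp h5
  exact h6.symm
end

section
/- In a UQ ring R, no two units sum to 1: for all u₁, u₂ ∈ U(R), u₁ + u₂ ≠ 1. -/
theorem uq_no_two_units_sum_to_one {R : Type*} [Ring R] [Nontrivial R]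
    (hR : IsUQRing R) (u₁ u₂ : R) (h₁ : IsUnit u₁) (h₂ : IsUnit u₂) :
    u₁ + u₂ ≠ 1 := by
  intro hsum
  obtain ⟨q, hq, hu⟩ := (hR u₂).mp h₂
  -- q = u₂ - 1 = -u₁, so q is a unit
  have hqu : IsUnit q := by
    have : q = -u₁ := by
      have h3 : u₂ = 1 - u₁ := eq_sub_of_add_eq' hsum
      rw [h3, sub_eq_add_neg] at hu
      exact (add_left_cancel hu.symm)
    rw [this]; exact h₁.neg
  obtain ⟨v, hv⟩ := hqu
  have hx := hq (↑v⁻¹) (by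
    have h1 : (↑v⁻¹ : R) * q = 1 := by rw [← hv]; exact_mod_cast v.inv_mul
    have h2 : q * (↑v⁻¹ : R) = 1 := by rw [← hv]; exact_mod_cast v.mul_inv
    rw [h1, h2])
  have h2 : q * (↑v⁻¹ : R) = 1 := by rw [← hv]; exact_mod_cast v.mul_inv
  rw [h2, sub_self] at hx
  exact not_isUnit_zero hx
end

section
/- In a UQ ring R, the element 2 belongs to the Jacobson radical J(R). -/
theorem uq_two_mem_jacobson {R : Type*} [Ring R] (hR : IsUQRing R) :
    (2 : R) ∈ (⊥ : Ideal R).jacobson := by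
  obtain ⟨q, hq, hu⟩ := (hR (-1)).mp isUnit_one.neg
  have hq2 : q = -2 := by
    rw [show (-2 : R) = -1 - 1 by norm_num, hu, add_sub_cancel_left]
  subst hq2
  rw [Ideal.mem_jacobson_iff]
  intro y
  obtain ⟨u, hu'⟩ := hq y (by noncomm_ring)
  refine ⟨↑u⁻¹, ?_⟩
  have h : (↑u⁻¹ : R) * y * 2 + ↑u⁻¹ - 1 = ↑u⁻¹ * (1 - (-2) * y) - 1 := by
    noncomm_ring
  rw [Ideal.mem_bot, h, ← hu', u.inv_mul, sub_self]
end

section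
/- Let R be a UQ ring and x ∈ R. Then x ∈ QN(R) if and only if x² ∈ QN(R). -/
private lemma two_mul_comm' {R : Type*} [Ring R] (a : R) : 2 * a = a * 2 := by
  rw [two_mul, mul_two]

/-- In a UQ ring, `1 + 2z` is a unit for every `z` (i.e. `2 ∈ J(R)`). -/
private lemma unit_one_add_two_mul {R : Type*} [Ring R] (hR : IsUQRing R) (z : R) :
    IsUnit (1 + 2 * z) := by
  obtain ⟨q, hq, hEq⟩ := (hR (-1)).mp isUnit_one.neg
  have hq2 : q = -2 := by
    have h1 : (-1 : R) - 1 = q := sub_eq_iff_eq_add'.mpr hEq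
    rw [← h1]; norm_num
  subst hq2
  have h := hq z (by rw [mul_neg, neg_mul, mul_two, two_mul])
  simpa [neg_mul, sub_neg_eq_add] using h

/-- In a UQ ring, `x` is quasinilpotent iff `1 + x` is a unit. -/
private lemma qn_iff_unit {R : Type*} [Ring R] (hR : IsUQRing R) (x : R) :
    IsQuasinilpotent x ↔ IsUnit (1 + x) := by
  constructor
  · intro h
    have := h (-1) (by rw [neg_one_mul, mul_neg_one])
    simpa [mul_neg_one, sub_neg_eq_add] using this
  · intro h
    obtain ⟨q, hq, hEq⟩ := (hR (1 + x)).mp h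
    have hx : x = q := add_left_cancel hEq
    rwa [hx]

private lemma isUnit_of_sq' {R : Type*} [Ring R] {a : R} (h : IsUnit (a * a)) :
    IsUnit a := by
  obtain ⟨u, hu⟩ := h
  have hc : Commute a ↑u := hu ▸ (Commute.refl a).mul_right (Commute.refl a)
  have hci : Commute a (↑u⁻¹ : R) := hc.units_inv_right
  refine isUnit_iff_exists.mpr ⟨a * ↑u⁻¹, ?_, ?_⟩
  · rw [← mul_assoc, ← hu, Units.mul_inv]
  · rw [mul_assoc, ← hci.eq, ← mul_assoc, ← hu, Units.mul_inv]

theorem uq_qn_iff_sq_qn {R : Type*} [Ring R] (hR : IsUQRing R) (x : R) :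
    IsQuasinilpotent x ↔ IsQuasinilpotent (x ^ 2) := by
  rw [qn_iff_unit hR, qn_iff_unit hR]
  constructor
  · rintro ⟨u, hu⟩
    have h1 : (↑(u * u) : R) * ↑(u * u)⁻¹ = 1 := Units.mul_inv _
    have h2 : (↑(u * u) : R) = 1 + 2 * x + x ^ 2 := by
      rw [Units.val_mul, hu]; noncomm_ring
    have key : (1 + x ^ 2) = ↑(u * u) * (1 + 2 * -((↑(u * u)⁻¹ : R) * x)) := by
      set c : R := ↑(u * u) with hc
      set w : R := ↑(u * u)⁻¹ with hw
      calc (1 + x ^ 2) = (1 + 2 * x + x ^ 2) - 2 * x := by noncomm_ring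
        _ = c - 2 * x := by rw [← h2]
        _ = c - 2 * ((c * w) * x) := by rw [h1, one_mul]
        _ = c - (2 * c) * (w * x) := by rw [mul_assoc 2 c (w * x), mul_assoc c w x]
        _ = c - (c * 2) * (w * x) := by rw [two_mul_comm']
        _ = c * (1 + 2 * -(w * x)) := by noncomm_ring
    rw [key]
    exact (u * u).isUnit.mul (unit_one_add_two_mul hR _)
  · rintro ⟨v, hv⟩
    apply isUnit_of_sq' (a := 1 + x)
    have h1 : (↑v : R) * ↑v⁻¹ = 1 := Units.mul_inv _
    have key : (1 + x) * (1 + x) = ↑v * (1 + 2 * ((↑v⁻¹ : R) * x)) := by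
      set c : R := ↑v with hc
      set w : R := ↑v⁻¹ with hw
      calc (1 + x) * (1 + x) = (1 + x ^ 2) + 2 * x := by noncomm_ring
        _ = c + 2 * x := by rw [← hv]
        _ = c + 2 * ((c * w) * x) := by rw [h1, one_mul]
        _ = c + (2 * c) * (w * x) := by rw [mul_assoc 2 c (w * x), mul_assoc c w x]
        _ = c + (c * 2) * (w * x) := by rw [two_mul_comm']
        _ = c * (1 + 2 * (w * x)) := by noncomm_ring
    rw [key]
    exact v.isUnit.mul (unit_one_add_two_mul hR _)
end
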